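/- Let H be a complex Hilbert space and let a, b, c be bounded linear operators on H. If a and b are normal (a*a = aa* and b*b = bb*) and ac = cb, then a*c = cb* (the Fuglede–Putnam theorem). -/

import Mathlib

open NormedSpace

/-- If `x * c = c * y` then the same holds for exponentials of multiples. -/
lemma exp_smul_mul_of_mul_eq {A : Type*} [NormedRing A] [NormedAlgebra ℂ A]
    [CompleteSpace A] {x y c : A} (h : x * c = c * y) (z : ℂ) :
    exp (z • x) * c = c * exp (z • y) := by
  have hpow : ∀ n : ℕ, x ^ n * c = c * y ^ n := by
    intro n; induction n with
    | zero => simp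
    | succ n ih => rw [pow_succ', mul_assoc, ih, ← mul_assoc, h, mul_assoc, ← pow_succ']
  simp only [exp_eq_tsum ℂ]
  rw [
    ← (expSeries_summable' (𝕂 := ℂ) (z • x)).tsum_mul_right,
    ← (expSeries_summable' (𝕂 := ℂ) (z • y)).tsum_mul_left]
  congr 1; ext n
  rw [smul_mul_assoc, mul_smul_comm, smul_pow, smul_pow, smul_mul_assoc, mul_smul_comm,
    hpow]

lemma exp_mul_exp_neg_self {A : Type*} [NormedRing A] [NormedAlgebra ℂ A]
    [CompleteSpace A] (x : A) : exp x * exp (-x) = 1 := by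
  letI : NormedAlgebra ℚ A := .restrictScalars ℚ ℂ A
  rw [← exp_add_of_commute ((Commute.refl x).neg_right), add_neg_cancel, exp_zero]

lemma exp_neg_mul_exp_self {A : Type*} [NormedRing A] [NormedAlgebra ℂ A]
    [CompleteSpace A] (x : A) : exp (-x) * exp x = 1 := by
  letI : NormedAlgebra ℚ A := .restrictScalars ℚ ℂ A
  rw [← exp_add_of_commute ((Commute.refl x).neg_left), neg_add_cancel, exp_zero]

set_option maxHeartbeats 1000000 in
/-- **The Fuglede–Putnam theorem.** Let `H` be a complex Hilbert space and let `a, b, c`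
be bounded linear operators on `H`. If `a` and `b` are normal (`a* a = a a*` and
`b* b = b b*`, where `star` is the Hilbert-space adjoint) and `a c = c b`, then
`a* c = c b*`. -/
theorem fuglede_putnam_bounded {H : Type*} [NormedAddCommGroup H]
    [InnerProductSpace ℂ H] [CompleteSpace H]
    (a b c : H →L[ℂ] H)
    (hna : star a * a = a * star a) (hnb : star b * b = b * star b)
    (h : a * c = c * b) :
    star a * c = c * star b := by
  letI : NormedAlgebra ℚ (H →L[ℂ] H) := .restrictScalars ℚ ℂ (H →L[ℂ] H)
  have hca : Commute (star a) a := hna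
  have hcb : Commute (star b) b := hnb
  set g : ℂ → (H →L[ℂ] H) := fun z => exp (z • star a) * c * exp (-(z • star b)) with hg
  have hbdd : ∀ z : ℂ, ‖g z‖ = ‖c‖ := by
    intro z
    have hmid : exp ((starRingEnd ℂ z) • a) * c = c * exp ((starRingEnd ℂ z) • b) :=
      exp_smul_mul_of_mul_eq h _
    have h1 : exp (z • star a) =
        exp (z • star a - (starRingEnd ℂ z) • a) * exp ((starRingEnd ℂ z) • a) := by
      rw [← exp_add_of_commute, sub_add_cancel]
      exact Commute.sub_left ((hca.smul_left z).smul_right _)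
        (((Commute.refl a).smul_left _).smul_right _)
    have h2 : exp (-(z • star b)) =
        exp (-((starRingEnd ℂ z) • b)) *
          exp ((starRingEnd ℂ z) • b - z • star b) := by
      rw [← exp_add_of_commute]
      · congr 1; abel
      · exact Commute.neg_left <| Commute.sub_right
          (((Commute.refl b).smul_left _).smul_right _)
          ((hcb.symm.smul_left _).smul_right z)
    have hu1 : exp (z • star a - (starRingEnd ℂ z) • a) ∈ unitary (H →L[ℂ] H) :=
      exp_mem_unitary_of_mem_skewAdjoint <| by
        simp [skewAdjoint.mem_iff, star_sub, star_smul, star_star, Complex.star_def, neg_sub]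
    have hu2 : exp ((starRingEnd ℂ z) • b - z • star b) ∈ unitary (H →L[ℂ] H) :=
      exp_mem_unitary_of_mem_skewAdjoint <| by
        simp [skewAdjoint.mem_iff, star_sub, star_smul, star_star, Complex.star_def, neg_sub]
    have key : g z = exp (z • star a - (starRingEnd ℂ z) • a) * c *
        exp ((starRingEnd ℂ z) • b - z • star b) := by
      rw [hg]; dsimp only
      rw [h1, h2, mul_assoc (exp (z • star a - (starRingEnd ℂ z) • a)), hmid,
        ← mul_assoc, ← mul_assoc, mul_assoc _ (exp ((starRingEnd ℂ z) • b)),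
        exp_mul_exp_neg_self, mul_one]
    rw [key, mul_assoc, CStarRing.norm_mem_unitary_mul _ hu1,
      CStarRing.norm_mul_mem_unitary _ hu2]
  have hdiff : Differentiable ℂ g := by
    have d1 : Differentiable ℂ fun z : ℂ => exp (z • star a) := fun z =>
      (hasDerivAt_exp_smul_const (star a) z).differentiableAt
    have d2 : Differentiable ℂ fun z : ℂ => exp (-(z • star b)) := by
      have : ∀ z : ℂ, -(z • star b) = z • (-star b) := fun z => (smul_neg z (star b)).symm
      simp only [this]
      exact fun z => (hasDerivAt_exp_smul_const (-star b) z).differentiableAt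
    exact (d1.mul_const c).mul d2
  have hconst : ∀ z : ℂ, g z = g 0 := by
    intro z
    apply hdiff.apply_eq_apply_of_bounded
    rw [Metric.isBounded_iff_subset_closedBall 0]
    refine ⟨‖c‖, ?_⟩
    rintro - ⟨z, rfl⟩
    simp [Metric.mem_closedBall, dist_zero_right, hbdd z]
  have hE : ∀ z : ℂ, exp (z • star a) * c = c * exp (z • star b) := by
    intro z
    have := hconst z
    rw [hg] at this
    simp only [zero_smul, neg_zero, exp_zero, mul_one, one_mul] at this
    calc exp (z • star a) * c
        = exp (z • star a) * c * exp (-(z • star b)) * exp (z • star b) := by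
          rw [mul_assoc, exp_neg_mul_exp_self, mul_one]
      _ = c * exp (z • star b) := by rw [this]
  have hfun : (fun z : ℂ => exp (z • star a) * c)
      = fun z : ℂ => c * exp (z • star b) := funext hE
  have hL : HasDerivAt (fun z : ℂ => exp (z • star a) * c)
      (star a * exp ((0 : ℂ) • star a) * c) 0 :=
    (hasDerivAt_exp_smul_const' (star a) 0).mul_const c
  have hR : HasDerivAt (fun z : ℂ => c * exp (z • star b))
      (c * (star b * exp ((0 : ℂ) • star b))) 0 :=
    (hasDerivAt_exp_smul_const' (star b) 0).const_mul c
  rw [hfun] at hL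
  have := hL.unique hR
  simpa [zero_smul, exp_zero, mul_one, one_mul] using this
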